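/- arXiv:2104.02348 — 3 statements merged into one kernel-verified Lean document; each statement's English description precedes it below -/
import Mathlib

section
/- Let α, β > −1, let w(x) = (1+x)^α (1−x)^β be the Jacobi weight on (−1,1), and let P be a real algebraic polynomial of degree at most n ≥ 1. Then ∫_{−1}^1 (1−x²)·P'(x)² · w(x) dx ≤ n(n+1+α+β) · ∫_{−1}^1 P(x)² · w(x) dx (the Guessab–Milovanović inequality). -/
open Real Set Polynomial MeasureTheory
open scoped RealInnerProductSpace

/-! ### Auxiliary lemmas for the Guessab–Milovanović inequality -/

lemma jacW_integrable (α β : ℝ) (hα : -1 < α) (hβ : -1 < β) :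
    IntegrableOn (fun x : ℝ => (1+x)^α * (1-x)^β) (Ioo (-1:ℝ) 1) := by
  have hmeas : Measurable (fun x : ℝ => (1+x)^α * (1-x)^β) := by fun_prop
  have h1 : IntegrableOn (fun x : ℝ => (1+x)^α) (Ioc (-1:ℝ) 0) := by
    have := (intervalIntegral.intervalIntegrable_rpow' (a := 0) (b := 1) hα).comp_add_left 1
    simp only [zero_sub, sub_self] at this
    rw [intervalIntegrable_iff_integrableOn_Ioc_of_le (by norm_num)] at this
    exact this
  have h2 : IntegrableOn (fun x : ℝ => (1-x)^β) (Ioc (0:ℝ) 1) := by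
    have := ((intervalIntegral.intervalIntegrable_rpow' (a := 0) (b := 1) hβ).comp_sub_left 1).symm
    simp only [sub_zero, sub_self] at this
    rw [intervalIntegrable_iff_integrableOn_Ioc_of_le (by norm_num)] at this
    exact this
  set c : ℝ := max (2 ^ α) (2 ^ β) ⊔ 1 with hc
  have hcα : ∀ x : ℝ, x ∈ Icc (-1:ℝ) 0 → (1-x)^β ≤ c := by
    intro x hx
    rcases le_or_gt 0 β with hb | hb
    · calc (1-x)^β ≤ 2^β := by
            apply Real.rpow_le_rpow (by linarith [hx.2]) (by linarith [hx.1]) hb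
        _ ≤ c := le_sup_left.trans' (le_max_right _ _)
    · calc (1-x)^β ≤ 1^β :=
            Real.rpow_le_rpow_of_nonpos (by linarith [hx.2]) (by linarith [hx.2]) hb.le
        _ ≤ c := by rw [Real.one_rpow]; exact le_sup_right
  have hcβ : ∀ x : ℝ, x ∈ Icc (0:ℝ) 1 → (1+x)^α ≤ c := by
    intro x hx
    rcases le_or_gt 0 α with ha | ha
    · calc (1+x)^α ≤ 2^α := by
            apply Real.rpow_le_rpow (by linarith [hx.1]) (by linarith [hx.2]) ha
        _ ≤ c := le_sup_left.trans' (le_max_left _ _)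
    · calc (1+x)^α ≤ 1^α :=
            Real.rpow_le_rpow_of_nonpos (by linarith [hx.1]) (by linarith [hx.1]) ha.le
        _ ≤ c := by rw [Real.one_rpow]; exact le_sup_right
  have hW1 : IntegrableOn (fun x : ℝ => (1+x)^α * (1-x)^β) (Ioc (-1:ℝ) 0) := by
    refine Integrable.mono' (h1.const_mul c) hmeas.aestronglyMeasurable.restrict ?_
    refine (ae_restrict_iff' measurableSet_Ioc).2 (.of_forall fun x hx => ?_)
    have h1x : (0:ℝ) ≤ 1 + x := by linarith [hx.1]
    have h2x : (0:ℝ) ≤ 1 - x := by linarith [hx.2]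
    rw [Real.norm_eq_abs, abs_of_nonneg (mul_nonneg (rpow_nonneg h1x α) (rpow_nonneg h2x β))]
    calc (1+x)^α * (1-x)^β ≤ (1+x)^α * c :=
          mul_le_mul_of_nonneg_left (hcα x ⟨hx.1.le, hx.2⟩) (rpow_nonneg h1x α)
      _ = c * (1+x)^α := mul_comm _ _
  have hW2 : IntegrableOn (fun x : ℝ => (1+x)^α * (1-x)^β) (Ioc (0:ℝ) 1) := by
    refine Integrable.mono' (h2.const_mul c) hmeas.aestronglyMeasurable.restrict ?_
    refine (ae_restrict_iff' measurableSet_Ioc).2 (.of_forall fun x hx => ?_)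
    have h1x : (0:ℝ) ≤ 1 + x := by linarith [hx.1]
    have h2x : (0:ℝ) ≤ 1 - x := by linarith [hx.2]
    rw [Real.norm_eq_abs, abs_of_nonneg (mul_nonneg (rpow_nonneg h1x α) (rpow_nonneg h2x β))]
    exact mul_le_mul_of_nonneg_right (hcβ x ⟨hx.1.le, hx.2⟩) (rpow_nonneg h2x β)
  refine (IntegrableOn.union hW1 hW2).mono_set ?_
  intro x hx
  rcases le_or_gt x 0 with h | h
  · exact Or.inl ⟨hx.1, h⟩
  · exact Or.inr ⟨h, hx.2.le⟩

lemma poly_mul_jacW_integrable (α β : ℝ) (hα : -1 < α) (hβ : -1 < β) (f : Polynomial ℝ) :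
    IntegrableOn (fun x : ℝ => f.eval x * ((1+x)^α * (1-x)^β)) (Ioo (-1:ℝ) 1) := by
  obtain ⟨c, hc⟩ := (isCompact_Icc (a := (-1:ℝ)) (b := 1)).exists_bound_of_continuousOn
    (f.continuous_aeval.continuousOn)
  refine Integrable.bdd_mul (c := c) (jacW_integrable α β hα hβ)
    f.continuous_aeval.aestronglyMeasurable.restrict ?_
  refine (ae_restrict_iff' measurableSet_Ioo).2 (.of_forall fun x hx => ?_)
  exact hc x ⟨hx.1.le, hx.2.le⟩

/-- The Jacobi differential operator `q ↦ ((α+β+2)X + (β-α))·q' - (1-X²)·q''`. -/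
noncomputable def jacobiOp (α β : ℝ) : Polynomial ℝ →ₗ[ℝ] Polynomial ℝ :=
  (LinearMap.mulLeft ℝ (C (α+β+2) * X + C (β-α))).comp derivative
    - (LinearMap.mulLeft ℝ (1 - X^2)).comp (derivative.comp derivative)

lemma jacobiOp_eval (α β : ℝ) (q : Polynomial ℝ) (x : ℝ) :
    (jacobiOp α β q).eval x = ((α+β+2)*x + (β-α)) * (derivative q).eval x
      - (1 - x^2) * (derivative (derivative q)).eval x := by
  simp [jacobiOp, LinearMap.mulLeft_apply]

lemma jacobiOp_coeff (α β : ℝ) (q : Polynomial ℝ) (k : ℕ) :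
    (jacobiOp α β q).coeff k = (k*(k+1+α+β)) * q.coeff k
      + (β-α)*(k+1)*(q.coeff (k+1)) - ((k+1)*(k+2))*(q.coeff (k+2)) := by
  have hX2 : ∀ (p : Polynomial ℝ) (m : ℕ),
      (X^2 * p).coeff m = if 2 ≤ m then p.coeff (m-2) else 0 := by
    intro p m
    split_ifs with h
    · obtain ⟨d, rfl⟩ := Nat.exists_eq_add_of_le h
      simpa [add_comm] using coeff_X_pow_mul p 2 d
    · interval_cases m <;> simp [coeff_mul, Finset.Nat.sum_antidiagonal_eq_sum_range_succ_mk, Finset.sum_range_succ]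
  have hX1 : ∀ (p : Polynomial ℝ) (m : ℕ),
      (X * p).coeff m = if 1 ≤ m then p.coeff (m-1) else 0 := by
    intro p m
    split_ifs with h
    · obtain ⟨d, rfl⟩ := Nat.exists_eq_add_of_le h
      simpa [add_comm] using coeff_X_mul (p := p) (n := d)
    · interval_cases m; simp [mul_coeff_zero]
  have expand : jacobiOp α β q = C (α+β+2) * (X * derivative q) + C (β-α) * derivative q
      - (derivative (derivative q) - X^2 * derivative (derivative q)) := by
    simp only [jacobiOp, LinearMap.sub_apply, LinearMap.comp_apply, LinearMap.mulLeft_apply]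
    ring
  rw [expand, coeff_sub, coeff_add, coeff_C_mul, coeff_C_mul, coeff_sub, hX1, hX2]
  match k with
  | 0 => simp [coeff_derivative]; ring
  | 1 => simp [coeff_derivative]; ring
  | (m+2) =>
    simp only [show (1:ℕ) ≤ m+2 by omega, show (2:ℕ) ≤ m+2 by omega, if_pos,
      Nat.add_sub_cancel, show m+2-1 = m+1 by omega, show m+2-2 = m by omega, coeff_derivative]
    push_cast
    ring

lemma jacobiOp_mem_degreeLT (α β : ℝ) (N : ℕ) (q : Polynomial ℝ) (hq : q ∈ degreeLT ℝ N) :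
    jacobiOp α β q ∈ degreeLT ℝ N := by
  rw [mem_degreeLT, degree_lt_iff_coeff_zero] at hq ⊢
  intro m hm
  rw [jacobiOp_coeff, hq m hm, hq (m+1) (by omega), hq (m+2) (by omega)]
  ring

lemma jacobiOp_eigenvalue (α β : ℝ) (q : Polynomial ℝ) (hq : q ≠ 0) (μ : ℝ)
    (h : jacobiOp α β q = μ • q) :
    μ = (q.natDegree : ℝ) * ((q.natDegree : ℝ) + 1 + α + β) := by
  set d := q.natDegree with hd
  have h1 : (jacobiOp α β q).coeff d = μ * q.coeff d := by rw [h]; simp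
  rw [jacobiOp_coeff, coeff_eq_zero_of_natDegree_lt (by omega : d < d + 1),
    coeff_eq_zero_of_natDegree_lt (by omega : d < d + 2)] at h1
  have hlc : q.coeff d ≠ 0 := mt leadingCoeff_eq_zero.1 hq
  have := h1
  field_simp at this
  rcases mul_eq_zero.1 (show (μ - (d:ℝ)*(d+1+α+β)) * q.coeff d = 0 by linear_combination -this) with h | h
  · linarith [h]
  · exact absurd h hlc

lemma jac_hasDerivAt (α β : ℝ) (p q : Polynomial ℝ) {x : ℝ} (hx : x ∈ Ioo (-1:ℝ) 1) :
    HasDerivAt (fun y : ℝ => (1+y)^(α+1) * (1-y)^(β+1) * (derivative q * p).eval y)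
      ((((1-X^2) * derivative p * derivative q - p * jacobiOp α β q).eval x)
        * ((1+x)^α * (1-x)^β)) x := by
  have h1x : (0:ℝ) < 1 + x := by linarith [hx.1]
  have h2x : (0:ℝ) < 1 - x := by linarith [hx.2]
  have h1 : HasDerivAt (fun y : ℝ => (1+y)^(α+1)) ((α+1) * (1+x)^α) x := by
    have := (HasDerivAt.const_add 1 (hasDerivAt_id x)).rpow_const (p := α+1) (Or.inl h1x.ne')
    simpa [add_sub_cancel_right] using this
  have h2 : HasDerivAt (fun y : ℝ => (1-y)^(β+1)) (-((β+1) * (1-x)^β)) x := by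
    have hd : HasDerivAt (fun y : ℝ => 1 - y) (-1) x := by
      simpa using (hasDerivAt_id x).const_sub 1
    have := hd.rpow_const (p := β+1) (Or.inl h2x.ne')
    rw [show -1 * (β+1) * (1-x)^(β+1-1) = -((β+1)*(1-x)^β) by
      rw [add_sub_cancel_right]; ring] at this
    exact this
  have h3 := (derivative q * p).hasDerivAt x
  have H := (h1.mul h2).mul h3
  refine H.congr_deriv (Eq.symm ?_)
  simp only [Pi.mul_apply]
  rw [Real.rpow_add_one h1x.ne' α, Real.rpow_add_one h2x.ne' β]
  simp only [derivative_mul, eval_mul, eval_add, eval_sub, eval_one, eval_pow, eval_X,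
    jacobiOp_eval]
  ring

lemma jac_tendsto_left (α β : ℝ) (hα : -1 < α) (f : Polynomial ℝ) :
    Filter.Tendsto (fun y : ℝ => (1+y)^(α+1) * (1-y)^(β+1) * f.eval y)
      (nhdsWithin (-1) (Ioi (-1:ℝ))) (nhds 0) := by
  have c1 : ContinuousAt (fun y : ℝ => (1+y)^(α+1)) (-1) := by
    have : ContinuousAt (fun t : ℝ => t ^ (α+1)) ((fun y : ℝ => 1 + y) (-1)) := by
      simp only [add_neg_cancel]
      exact Real.continuousAt_rpow_const 0 (α+1) (Or.inr (by linarith))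
    exact this.comp (by fun_prop)
  have c2 : ContinuousAt (fun y : ℝ => (1-y)^(β+1)) (-1) := by
    have : ContinuousAt (fun t : ℝ => t ^ (β+1)) ((fun y : ℝ => 1 - y) (-1)) :=
      Real.continuousAt_rpow_const _ _ (Or.inl (by norm_num))
    exact this.comp (by fun_prop)
  have := ((c1.mul c2).mul f.continuous_aeval.continuousAt).tendsto
  simp only [Pi.mul_apply, add_neg_cancel, Real.zero_rpow (by linarith : α + 1 ≠ 0), zero_mul] at this
  exact this.mono_left nhdsWithin_le_nhds

lemma jac_tendsto_right (α β : ℝ) (hβ : -1 < β) (f : Polynomial ℝ) :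
    Filter.Tendsto (fun y : ℝ => (1+y)^(α+1) * (1-y)^(β+1) * f.eval y)
      (nhdsWithin 1 (Iio (1:ℝ))) (nhds 0) := by
  have c1 : ContinuousAt (fun y : ℝ => (1+y)^(α+1)) 1 := by
    have : ContinuousAt (fun t : ℝ => t ^ (α+1)) ((fun y : ℝ => 1 + y) 1) :=
      Real.continuousAt_rpow_const _ _ (Or.inl (by norm_num))
    exact this.comp (by fun_prop)
  have c2 : ContinuousAt (fun y : ℝ => (1-y)^(β+1)) 1 := by
    have : ContinuousAt (fun t : ℝ => t ^ (β+1)) ((fun y : ℝ => 1 - y) 1) := by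
      simp only [sub_self]
      exact Real.continuousAt_rpow_const 0 (β+1) (Or.inr (by linarith))
    exact this.comp (by fun_prop)
  have := ((c1.mul c2).mul f.continuous_aeval.continuousAt).tendsto
  simp only [Pi.mul_apply, sub_self, Real.zero_rpow (by linarith : β + 1 ≠ 0), mul_zero, zero_mul] at this
  exact this.mono_left nhdsWithin_le_nhds

lemma jac_integral_deriv_zero (α β : ℝ) (hα : -1 < α) (hβ : -1 < β) (p q : Polynomial ℝ) :
    ∫ x in Ioo (-1:ℝ) 1,
      (((1-X^2) * derivative p * derivative q - p * jacobiOp α β q).eval x)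
        * ((1+x)^α * (1-x)^β) = 0 := by
  set R := (1-X^2) * derivative p * derivative q - p * jacobiOp α β q with hR
  have hint : IntervalIntegrable (fun x : ℝ => R.eval x * ((1+x)^α * (1-x)^β))
      MeasureTheory.volume (-1) 1 := by
    rw [intervalIntegrable_iff_integrableOn_Ioo_of_le (by norm_num)]
    exact poly_mul_jacW_integrable α β hα hβ R
  have := intervalIntegral.integral_eq_sub_of_hasDerivAt_of_tendsto (f := fun y : ℝ =>
      (1+y)^(α+1) * (1-y)^(β+1) * (derivative q * p).eval y)
    (by norm_num : (-1:ℝ) < 1) (fun x hx => jac_hasDerivAt α β p q hx) hint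
    (jac_tendsto_left α β hα _) (jac_tendsto_right α β hβ _)
  rw [intervalIntegral.integral_of_le (by norm_num : (-1:ℝ) ≤ 1),
    integral_Ioc_eq_integral_Ioo] at this
  rw [show (0:ℝ) = 0 - 0 by ring]
  rw [← this]

/-- The Jacobi-weighted inner product of two polynomials. -/
noncomputable def jacInner (α β : ℝ) (p q : Polynomial ℝ) : ℝ :=
  ∫ x in Ioo (-1:ℝ) 1, (p*q).eval x * ((1+x)^α * (1-x)^β)

lemma jacInner_comm (α β : ℝ) (p q : Polynomial ℝ) : jacInner α β p q = jacInner α β q p := by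
  rw [jacInner, jacInner, mul_comm p q]

lemma jacInner_add_left (α β : ℝ) (hα : -1 < α) (hβ : -1 < β) (p₁ p₂ q : Polynomial ℝ) :
    jacInner α β (p₁ + p₂) q = jacInner α β p₁ q + jacInner α β p₂ q := by
  rw [jacInner, jacInner, jacInner, ← integral_add (poly_mul_jacW_integrable α β hα hβ _)
    (poly_mul_jacW_integrable α β hα hβ _)]
  apply setIntegral_congr_fun measurableSet_Ioo
  intro x _
  simp
  ring

lemma jacInner_smul_left (α β : ℝ) (r : ℝ) (p q : Polynomial ℝ) :
    jacInner α β (r • p) q = r * jacInner α β p q := by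
  rw [jacInner, jacInner, ← MeasureTheory.integral_const_mul]
  apply setIntegral_congr_fun measurableSet_Ioo
  intro x _
  simp
  ring

lemma jacInner_nonneg (α β : ℝ) (p : Polynomial ℝ) : 0 ≤ jacInner α β p p := by
  apply setIntegral_nonneg measurableSet_Ioo
  intro x hx
  have h1x : (0:ℝ) ≤ 1 + x := by linarith [hx.1]
  have h2x : (0:ℝ) ≤ 1 - x := by linarith [hx.2]
  simp only [eval_mul]
  exact mul_nonneg (mul_self_nonneg _) (mul_nonneg (rpow_nonneg h1x α) (rpow_nonneg h2x β))

lemma jacB_eq (α β : ℝ) (hα : -1 < α) (hβ : -1 < β) (p q : Polynomial ℝ) :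
    ∫ x in Ioo (-1:ℝ) 1, ((1-X^2) * derivative p * derivative q).eval x * ((1+x)^α * (1-x)^β)
      = jacInner α β p (jacobiOp α β q) := by
  have h0 := jac_integral_deriv_zero α β hα hβ p q
  have hsplit : ∫ x in Ioo (-1:ℝ) 1,
      (((1-X^2) * derivative p * derivative q - p * jacobiOp α β q).eval x)
        * ((1+x)^α * (1-x)^β)
      = (∫ x in Ioo (-1:ℝ) 1, ((1-X^2) * derivative p * derivative q).eval x
          * ((1+x)^α * (1-x)^β))
        - ∫ x in Ioo (-1:ℝ) 1, ((p * jacobiOp α β q).eval x) * ((1+x)^α * (1-x)^β) := by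
    rw [← integral_sub (poly_mul_jacW_integrable α β hα hβ _)
      (poly_mul_jacW_integrable α β hα hβ _)]
    apply setIntegral_congr_fun measurableSet_Ioo
    intro x _
    simp
    ring
  rw [h0] at hsplit
  rw [jacInner]
  linarith [hsplit]

lemma jacInner_op_symm (α β : ℝ) (hα : -1 < α) (hβ : -1 < β) (p q : Polynomial ℝ) :
    jacInner α β (jacobiOp α β p) q = jacInner α β p (jacobiOp α β q) := by
  rw [jacInner_comm, ← jacB_eq α β hα hβ q p, ← jacB_eq α β hα hβ p q]
  rw [show (1-X^2) * derivative q * derivative p = (1-X^2) * derivative p * derivative q by ring]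

lemma jacInner_definite (α β : ℝ) (hα : -1 < α) (hβ : -1 < β) (p : Polynomial ℝ)
    (h : jacInner α β p p = 0) : p = 0 := by
  by_contra hp
  have hint := poly_mul_jacW_integrable α β hα hβ (p*p)
  have hnn : 0 ≤ᵐ[volume.restrict (Ioo (-1:ℝ) 1)]
      (fun x : ℝ => (p*p).eval x * ((1+x)^α * (1-x)^β)) := by
    refine (ae_restrict_iff' measurableSet_Ioo).2 (.of_forall fun x hx => ?_)
    have h1x : (0:ℝ) ≤ 1 + x := by linarith [hx.1]
    have h2x : (0:ℝ) ≤ 1 - x := by linarith [hx.2]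
    simp only [eval_mul]
    exact mul_nonneg (mul_self_nonneg _) (mul_nonneg (rpow_nonneg h1x α) (rpow_nonneg h2x β))
  have hae0 := (setIntegral_eq_zero_iff_of_nonneg_ae hnn hint).1 h
  rw [Filter.EventuallyEq, ae_restrict_iff' measurableSet_Ioo] at hae0
  have hZ : ∀ᵐ x : ℝ, x ∉ {x : ℝ | p.IsRoot x} :=
    measure_eq_zero_iff_ae_notMem.1 ((p.finite_setOf_isRoot hp).measure_zero _)
  have : ∀ᵐ x : ℝ, x ∉ Ioo (-1:ℝ) 1 := by
    filter_upwards [hae0, hZ] with x hx hz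
    intro hmem
    apply hz
    have h1x : (0:ℝ) < 1 + x := by linarith [hmem.1]
    have h2x : (0:ℝ) < 1 - x := by linarith [hmem.2]
    have hW : 0 < (1+x)^α * (1-x)^β :=
      mul_pos (rpow_pos_of_pos h1x α) (rpow_pos_of_pos h2x β)
    have := hx hmem
    rw [eval_mul] at this
    rcases mul_eq_zero.1 this with h' | h'
    · exact mul_self_eq_zero.1 h'
    · exact absurd h' hW.ne'
  have h2 : volume (Ioo (-1:ℝ) 1) = 0 := measure_eq_zero_iff_ae_notMem.2 this
  rw [Real.volume_Ioo] at h2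
  norm_num at h2

lemma symm_inner_le_of_eigenvalues_le {E : Type*} [NormedAddCommGroup E]
    [InnerProductSpace ℝ E] [FiniteDimensional ℝ E] (T : E →ₗ[ℝ] E)
    (hT : T.IsSymmetric) (Λ : ℝ) (hev : ∀ μ : ℝ, Module.End.HasEigenvalue T μ → μ ≤ Λ)
    (v : E) : ⟪T v, v⟫ ≤ Λ * ⟪v, v⟫ := by
  set S : E →ₗ[ℝ] E := Λ • LinearMap.id - T with hSdef
  have hS : S.IsSymmetric := by
    intro x y
    simp only [hSdef, LinearMap.sub_apply, LinearMap.smul_apply, LinearMap.id_apply,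
      inner_sub_left, inner_sub_right, real_inner_smul_left, real_inner_smul_right, hT x y]
  have hSpos : ∀ μ : ℝ, Module.End.HasEigenvalue S μ → 0 ≤ μ := by
    intro μ hμ
    obtain ⟨u, hu⟩ := hμ.exists_hasEigenvector
    have hTu : T u = (Λ - μ) • u := by
      have h1 : S u = μ • u := hu.apply_eq_smul
      simp only [hSdef, LinearMap.sub_apply, LinearMap.smul_apply, LinearMap.id_apply] at h1
      rw [sub_smul]
      rw [← h1]
      abel
    have : Module.End.HasEigenvalue T (Λ - μ) :=
      Module.End.hasEigenvalue_of_hasEigenvector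
        ⟨Module.End.mem_eigenspace_iff.2 hTu, hu.2⟩
    have := hev _ this
    linarith
  have key : 0 ≤ ⟪S v, v⟫ := by
    set N := Module.finrank ℝ E with hN
    let b := hS.eigenvectorBasis hN.symm
    set μ := hS.eigenvalues hN.symm with hμ
    have hw : v = ∑ i, b.repr v i • b i := (b.sum_repr v).symm
    have hsw : S v = ∑ i, (μ i * b.repr v i) • b i := by
      conv_lhs => rw [hw, map_sum]
      refine Finset.sum_congr rfl fun i _ => ?_
      rw [LinearMap.map_smul, hS.apply_eigenvectorBasis, smul_smul, mul_comm]
      norm_num [μ, b]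
    calc (0:ℝ) ≤ ∑ i, μ i * (b.repr v i)^2 := by
          apply Finset.sum_nonneg
          intro i _
          exact mul_nonneg (hSpos _ (hS.hasEigenvalue_eigenvalues hN.symm i)) (sq_nonneg _)
      _ = ⟪S v, v⟫ := by
          rw [hsw, sum_inner]
          refine Finset.sum_congr rfl fun i _ => ?_
          rw [real_inner_smul_left, ← OrthonormalBasis.repr_apply_apply]
          ring
  have expand : ⟪S v, v⟫ = Λ * ⟪v, v⟫ - ⟪T v, v⟫ := by
    simp only [hSdef, LinearMap.sub_apply, LinearMap.smul_apply, LinearMap.id_apply,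
      inner_sub_left, real_inner_smul_left]
  linarith

/-- The Guessab–Milovanović inequality: for a Jacobi weight
`w(x) = (1+x)^α (1−x)^β` with `α, β > −1` and a real polynomial `P` of degree at most
`n ≥ 1`,
`∫_{−1}^1 (1−x²) P'(x)² w(x) dx ≤ n(n+1+α+β) ∫_{−1}^1 P(x)² w(x) dx`. -/
theorem guessab_milovanovic (α β : ℝ) (hα : -1 < α) (hβ : -1 < β)
    (w : ℝ → ℝ) (hw : ∀ x, w x = (1 + x) ^ α * (1 - x) ^ β)
    (n : ℕ) (hn : 1 ≤ n) (P : Polynomial ℝ) (hP : P.degree ≤ n) :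
    (∫ x in Set.Ioo (-1 : ℝ) 1, (1 - x ^ 2) * (Polynomial.derivative P).eval x ^ 2 * w x) ≤
      (n : ℝ) * ((n : ℝ) + 1 + α + β) * ∫ x in Set.Ioo (-1 : ℝ) 1, P.eval x ^ 2 * w x := by
  classical
  set V := degreeLT ℝ (n+1) with hV
  haveI : Module.Finite ℝ V := Module.Finite.equiv (degreeLTEquiv ℝ (n+1)).symm
  -- inner product structure
  let core : InnerProductSpace.Core ℝ V :=
  { inner := fun p q => jacInner α β p.1 q.1
    conj_inner_symm := fun x y => by
      simpa using jacInner_comm α β y.1 x.1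
    re_inner_nonneg := fun x => by simpa using jacInner_nonneg α β x.1
    add_left := fun x y z => by
      simpa using jacInner_add_left α β hα hβ x.1 y.1 z.1
    smul_left := fun x y r => by
      simpa using jacInner_smul_left α β r x.1 y.1
    definite := fun x hx => by
      apply Subtype.ext
      exact jacInner_definite α β hα hβ x.1 (by simpa using hx) }
  letI : NormedAddCommGroup V := core.toNormedAddCommGroup
  letI : InnerProductSpace ℝ V := InnerProductSpace.ofCore core.toCore
  have hinner : ∀ x y : V, ⟪x, y⟫ = jacInner α β x.1 y.1 := fun x y => rfl
  -- the operator restricted to V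
  let T : V →ₗ[ℝ] V := (jacobiOp α β).restrict
    (fun q hq => jacobiOp_mem_degreeLT α β (n+1) q hq)
  have hTval : ∀ x : V, (T x).1 = jacobiOp α β x.1 := fun x => rfl
  have hTsym : T.IsSymmetric := by
    intro x y
    rw [hinner, hinner, hTval]
    exact jacInner_op_symm α β hα hβ x.1 y.1
  set Λ : ℝ := (n : ℝ) * ((n : ℝ) + 1 + α + β) with hΛ
  have hev : ∀ μ : ℝ, Module.End.HasEigenvalue T μ → μ ≤ Λ := by
    intro μ hμ
    obtain ⟨u, hu⟩ := hμ.exists_hasEigenvector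
    have hu1 : u.1 ≠ 0 := fun h => hu.2 (Subtype.ext h)
    have happ : jacobiOp α β u.1 = μ • u.1 := by
      have := hu.apply_eq_smul
      have := congrArg Subtype.val this
      simpa [hTval] using this
    have hdval := jacobiOp_eigenvalue α β u.1 hu1 μ happ
    have hdeg : u.1.natDegree ≤ n := by
      have hmem : u.1 ∈ degreeLT ℝ (n+1) := u.2
      rw [mem_degreeLT] at hmem
      have h2 := (natDegree_lt_iff_degree_lt hu1).2 hmem
      omega
    set d := u.1.natDegree with hd
    rw [hdval, hΛ]
    have hdn : (d : ℝ) ≤ (n : ℝ) := by exact_mod_cast hdeg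
    have hd0 : (0:ℝ) ≤ (d : ℝ) := Nat.cast_nonneg d
    have hn1 : (1:ℝ) ≤ (n : ℝ) := by exact_mod_cast hn
    nlinarith [hdn, hd0, hn1, hα, hβ]
  -- membership of P
  have hPmem : P ∈ V := by
    rw [hV, mem_degreeLT]
    calc P.degree ≤ (n : WithBot ℕ) := hP
      _ < ((n+1 : ℕ) : WithBot ℕ) := by exact_mod_cast Nat.lt_succ_self n
  set v : V := ⟨P, hPmem⟩ with hv
  have main := symm_inner_le_of_eigenvalues_le T hTsym Λ hev v
  rw [hinner, hinner, hTval] at main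
  -- identify LHS
  have hLHS : (∫ x in Set.Ioo (-1 : ℝ) 1,
      (1 - x ^ 2) * (Polynomial.derivative P).eval x ^ 2 * w x)
      = jacInner α β (jacobiOp α β P) P := by
    rw [jacInner_op_symm α β hα hβ P P, ← jacB_eq α β hα hβ P P]
    apply setIntegral_congr_fun measurableSet_Ioo
    intro x _
    simp only [hw, eval_mul, eval_sub, eval_one, eval_pow, eval_X]
    ring
  have hRHS : (∫ x in Set.Ioo (-1 : ℝ) 1, P.eval x ^ 2 * w x) = jacInner α β P P := by
    rw [jacInner]
    apply setIntegral_congr_fun measurableSet_Ioo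
    intro x _
    simp only [hw, eval_mul]
    ring
  rw [hLHS, hRHS]
  exact main
end

section
/- Let P be a real algebraic polynomial of degree at most n ≥ 1. Then ∫_{−1}^1 √(1−x²) · P'(x)² dx ≤ n² · ∫_{−1}^1 P(x)² / √(1−x²) dx (the weighted L²-Bernstein inequality for the Chebyshev weight, i.e., the case α = β = −1/2 of the Guessab–Milovanović inequality). -/
open Real Set Polynomial MeasureTheory

section GMaux

lemma GM_cos_image_Ioo : Real.cos '' Set.Ioo 0 π = Set.Ioo (-1 : ℝ) 1 := by
  ext x
  constructor
  · rintro ⟨θ, ⟨h0, hπ⟩, rfl⟩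
    constructor
    · have := Real.strictAntiOn_cos ⟨h0.le, hπ.le⟩ (right_mem_Icc.2 Real.pi_pos.le) hπ
      simpa [Real.cos_pi] using this
    · have := Real.strictAntiOn_cos (left_mem_Icc.2 Real.pi_pos.le) ⟨h0.le, hπ.le⟩ h0
      simpa [Real.cos_zero] using this
  · rintro ⟨h1, h2⟩
    refine ⟨Real.arccos x, ⟨Real.arccos_pos.2 h2, ?_⟩, Real.cos_arccos h1.le h2.le⟩
    refine lt_of_le_of_ne (Real.arccos_le_pi x) (fun h => ?_)
    have : x = -1 := by
      have := Real.cos_arccos h1.le h2.le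
      rw [h, Real.cos_pi] at this; linarith
    linarith

lemma GM_subst_cos (g : ℝ → ℝ) :
    ∫ x in Set.Ioo (-1 : ℝ) 1, g x = ∫ θ in Set.Ioo (0 : ℝ) π, Real.sin θ * g (Real.cos θ) := by
  rw [← GM_cos_image_Ioo]
  rw [integral_image_eq_integral_abs_deriv_smul measurableSet_Ioo
    (fun x _ => (Real.hasDerivAt_cos x).hasDerivWithinAt)
    (Real.injOn_cos.mono (Set.Ioo_subset_Icc_self)) g]
  refine setIntegral_congr_fun measurableSet_Ioo (fun θ hθ => ?_)
  have : |(-Real.sin θ)| = Real.sin θ := by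
    rw [abs_neg, abs_of_nonneg (Real.sin_nonneg_of_nonneg_of_le_pi hθ.1.le hθ.2.le)]
  rw [this, smul_eq_mul]

lemma GM_X_mul_T (j : ℤ) : (X : ℝ[X]) * Polynomial.Chebyshev.T ℝ j
    = (1/2 : ℝ) • Polynomial.Chebyshev.T ℝ (j+1)
      + (1/2 : ℝ) • Polynomial.Chebyshev.T ℝ (j-1) := by
  have h := Polynomial.Chebyshev.T_add_two ℝ (j - 1)
  have e1 : j - 1 + 2 = j + 1 := by ring
  have e2 : j - 1 + 1 = j := by ring
  rw [e1, e2] at h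
  rw [h, Polynomial.smul_eq_C_mul, Polynomial.smul_eq_C_mul]
  have h2 : (2 : ℝ[X]) = Polynomial.C 2 := (map_ofNat Polynomial.C 2).symm
  rw [h2, mul_sub, ← mul_assoc, ← mul_assoc, ← Polynomial.C_mul]
  norm_num

lemma GM_Xpow_mem (m : ℕ) : (X : ℝ[X]) ^ m ∈
    Submodule.span ℝ {p : ℝ[X] | ∃ k : ℕ, k ≤ m ∧ p = Polynomial.Chebyshev.T ℝ k} := by
  induction m with
  | zero =>
    have : (X : ℝ[X]) ^ 0 = Polynomial.Chebyshev.T ℝ 0 := by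
      simp [Polynomial.Chebyshev.T_zero]
    rw [this]
    exact Submodule.subset_span ⟨0, le_refl _, rfl⟩
  | succ m ih =>
    rw [pow_succ, mul_comm]
    refine Submodule.span_induction ?_ ?_ ?_ ?_ ih
    · rintro p ⟨k, hk, rfl⟩
      rw [GM_X_mul_T (k : ℤ)]
      refine Submodule.add_mem _
        (Submodule.smul_mem _ _ (Submodule.subset_span ⟨k+1, by omega, by push_cast; ring_nf⟩)) ?_
      rcases Nat.eq_zero_or_pos k with rfl | hk0
      · refine Submodule.smul_mem _ _ (Submodule.subset_span ⟨1, by omega, ?_⟩)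
        rw [show (((0:ℕ)):ℤ) - 1 = -1 by norm_num, Polynomial.Chebyshev.T_neg_one]
        simp [Polynomial.Chebyshev.T_one]
      · refine Submodule.smul_mem _ _ (Submodule.subset_span ⟨k-1, by omega, ?_⟩)
        congr 1
        omega
    · rw [mul_zero]; exact Submodule.zero_mem _
    · intro p q _ _ hp hq
      rw [mul_add]; exact Submodule.add_mem _ hp hq
    · intro c p _ hp
      rw [mul_smul_comm]; exact Submodule.smul_mem _ _ hp

lemma GM_cheb_expand (n : ℕ) (P : ℝ[X]) (hP : P.degree ≤ n) :
    ∃ a : Fin (n+1) → ℝ, P = ∑ k : Fin (n+1), a k • Polynomial.Chebyshev.T ℝ (k : ℤ) := by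
  have hmem : P ∈ Submodule.span ℝ
      (Set.range (fun k : Fin (n+1) => Polynomial.Chebyshev.T ℝ (k : ℤ))) := by
    have hsub : {p : ℝ[X] | ∃ k : ℕ, k ≤ n ∧ p = Polynomial.Chebyshev.T ℝ k}
        ⊆ Set.range (fun k : Fin (n+1) => Polynomial.Chebyshev.T ℝ (k : ℤ)) := by
      rintro p ⟨k, hk, rfl⟩
      exact ⟨⟨k, by omega⟩, rfl⟩
    have := Polynomial.as_sum_range' P (n+1) (by
      have := Polynomial.natDegree_le_iff_degree_le.2 hP
      omega)
    rw [this]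
    refine Submodule.sum_mem _ (fun m hm => ?_)
    rw [← Polynomial.C_mul_X_pow_eq_monomial, ← Polynomial.smul_eq_C_mul]
    refine Submodule.smul_mem _ _ ?_
    have h1 : (X : ℝ[X]) ^ m ∈ Submodule.span ℝ
        {p : ℝ[X] | ∃ k : ℕ, k ≤ m ∧ p = Polynomial.Chebyshev.T ℝ k} := GM_Xpow_mem m
    refine Submodule.span_mono (fun p hp => hsub ?_) h1
    obtain ⟨k, hk, rfl⟩ := hp
    exact ⟨k, by simp at hm; omega, rfl⟩
  rw [Submodule.mem_span_range_iff_exists_fun] at hmem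
  obtain ⟨a, ha⟩ := hmem
  exact ⟨a, ha.symm⟩

lemma GM_int_cos (m : ℤ) : ∫ θ in (0:ℝ)..π, Real.cos (m * θ) = if m = 0 then π else 0 := by
  rcases eq_or_ne m (0:ℤ) with h | h
  · simp [h, Real.pi_pos.le]
  · have hm : (m:ℝ) ≠ 0 := Int.cast_ne_zero.2 h
    rw [if_neg h]
    have := intervalIntegral.integral_comp_mul_left (a := (0:ℝ)) (b := π)
      (fun x => Real.cos x) hm
    rw [this]
    simp [Real.sin_int_mul_pi]

lemma GM_int_sin_sin (j k : ℤ) : ∫ θ in (0:ℝ)..π, Real.sin (j * θ) * Real.sin (k * θ)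
    = ((if j - k = 0 then π else 0) - (if j + k = 0 then π else 0)) / 2 := by
  have h : ∀ θ : ℝ, Real.sin (j * θ) * Real.sin (k * θ)
      = (Real.cos ((j - k) * θ) - Real.cos ((j + k) * θ)) / 2 := by
    intro θ
    have h1 := Real.cos_add (j * θ) (k * θ)
    have h2 := Real.cos_sub (j * θ) (k * θ)
    have e1 : ((j:ℝ) - k) * θ = j * θ - k * θ := by ring
    have e2 : ((j:ℝ) + k) * θ = j * θ + k * θ := by ring
    rw [e1, e2, h1, h2]; ring
  simp only [h]
  rw [intervalIntegral.integral_div, intervalIntegral.integral_sub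
    (Continuous.intervalIntegrable (by fun_prop) 0 π)
    (Continuous.intervalIntegrable (by fun_prop) 0 π)]
  have a1 := GM_int_cos (j - k); have a2 := GM_int_cos (j + k)
  push_cast at a1 a2 ⊢
  rw [a1, a2]

lemma GM_int_cos_cos (j k : ℤ) : ∫ θ in (0:ℝ)..π, Real.cos (j * θ) * Real.cos (k * θ)
    = ((if j - k = 0 then π else 0) + (if j + k = 0 then π else 0)) / 2 := by
  have h : ∀ θ : ℝ, Real.cos (j * θ) * Real.cos (k * θ)
      = (Real.cos ((j - k) * θ) + Real.cos ((j + k) * θ)) / 2 := by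
    intro θ
    have h1 := Real.cos_add (j * θ) (k * θ)
    have h2 := Real.cos_sub (j * θ) (k * θ)
    have e1 : ((j:ℝ) - k) * θ = j * θ - k * θ := by ring
    have e2 : ((j:ℝ) + k) * θ = j * θ + k * θ := by ring
    rw [e1, e2, h1, h2]; ring
  simp only [h]
  rw [intervalIntegral.integral_div, intervalIntegral.integral_add
    (Continuous.intervalIntegrable (by fun_prop) 0 π)
    (Continuous.intervalIntegrable (by fun_prop) 0 π)]
  have a1 := GM_int_cos (j - k); have a2 := GM_int_cos (j + k)
  push_cast at a1 a2 ⊢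
  rw [a1, a2]

lemma GM_int_sq_sin (n : ℕ) (c : Fin (n+1) → ℝ) :
    ∫ θ in (0:ℝ)..π, (∑ k : Fin (n+1), c k * Real.sin ((k:ℕ) * θ))^2
      = (∑ k : Fin (n+1), c k ^ 2 * (π/2)) - c 0 ^ 2 * (π/2) := by
  have key : ∀ θ : ℝ, (∑ k : Fin (n+1), c k * Real.sin ((k:ℕ) * θ))^2
      = ∑ j : Fin (n+1), ∑ k : Fin (n+1),
          (c j * c k) * (Real.sin ((j:ℕ) * θ) * Real.sin ((k:ℕ) * θ)) := by
    intro θ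
    rw [sq, Finset.sum_mul_sum]
    exact Finset.sum_congr rfl fun j _ => Finset.sum_congr rfl fun k _ => by ring
  simp only [key]
  rw [intervalIntegral.integral_finset_sum (fun j _ => Continuous.intervalIntegrable
    (continuous_finset_sum _ (fun k _ => by fun_prop)) 0 π)]
  have step : ∀ j : Fin (n+1),
      (∫ θ in (0:ℝ)..π, ∑ k : Fin (n+1),
        (c j * c k) * (Real.sin ((j:ℕ) * θ) * Real.sin ((k:ℕ) * θ)))
      = ∑ k : Fin (n+1), (c j * c k) *
          (((if ((j:ℕ):ℤ) - ((k:ℕ):ℤ) = 0 then π else 0)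
            - (if ((j:ℕ):ℤ) + ((k:ℕ):ℤ) = 0 then π else 0)) / 2) := by
    intro j
    rw [intervalIntegral.integral_finset_sum
      (fun k _ => Continuous.intervalIntegrable (by fun_prop) 0 π)]
    refine Finset.sum_congr rfl fun k _ => ?_
    rw [intervalIntegral.integral_const_mul]
    congr 1
    have := GM_int_sin_sin ((j:ℕ):ℤ) ((k:ℕ):ℤ)
    push_cast at this ⊢
    exact this
  simp only [step]
  have eval_term : ∀ j k : Fin (n+1),
      (c j * c k) * (((if ((j:ℕ):ℤ) - ((k:ℕ):ℤ) = 0 then π else 0)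
        - (if ((j:ℕ):ℤ) + ((k:ℕ):ℤ) = 0 then π else 0)) / 2)
      = (if k = j then c j * c k * (π/2) else 0)
        - (if j = 0 then (if k = 0 then c j * c k * (π/2) else 0) else 0) := by
    intro j k
    have h1 : (((j:ℕ):ℤ) - ((k:ℕ):ℤ) = 0) ↔ k = j :=
      ⟨fun h => Fin.ext (by omega), fun h => by subst h; ring⟩
    have h2 : (((j:ℕ):ℤ) + ((k:ℕ):ℤ) = 0) ↔ (j = 0 ∧ k = 0) := by
      constructor
      · intro h
        exact ⟨Fin.ext (by rw [Fin.val_zero]; omega), Fin.ext (by rw [Fin.val_zero]; omega)⟩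
      · rintro ⟨rfl, rfl⟩; simp
    simp only [h1, h2]
    split_ifs with ha hb hc <;> simp_all <;> ring
  simp only [eval_term]
  rw [Finset.sum_comm (s := Finset.univ) (t := Finset.univ)
    (f := fun j k => (if k = j then c j * c k * (π/2) else 0)
        - (if j = 0 then (if k = 0 then c j * c k * (π/2) else 0) else 0))]
  simp only [Finset.sum_sub_distrib]
  congr 1
  · refine Finset.sum_congr rfl fun k _ => ?_
    rw [Finset.sum_ite_eq Finset.univ k (fun j => c j * c k * (π/2))]
    simp [sq]
  · simp [Finset.sum_ite_eq', sq]

lemma GM_int_sq_cos (n : ℕ) (c : Fin (n+1) → ℝ) :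
    ∫ θ in (0:ℝ)..π, (∑ k : Fin (n+1), c k * Real.cos ((k:ℕ) * θ))^2
      = (∑ k : Fin (n+1), c k ^ 2 * (π/2)) + c 0 ^ 2 * (π/2) := by
  have key : ∀ θ : ℝ, (∑ k : Fin (n+1), c k * Real.cos ((k:ℕ) * θ))^2
      = ∑ j : Fin (n+1), ∑ k : Fin (n+1),
          (c j * c k) * (Real.cos ((j:ℕ) * θ) * Real.cos ((k:ℕ) * θ)) := by
    intro θ
    rw [sq, Finset.sum_mul_sum]
    exact Finset.sum_congr rfl fun j _ => Finset.sum_congr rfl fun k _ => by ring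
  simp only [key]
  rw [intervalIntegral.integral_finset_sum (fun j _ => Continuous.intervalIntegrable
    (continuous_finset_sum _ (fun k _ => by fun_prop)) 0 π)]
  have step : ∀ j : Fin (n+1),
      (∫ θ in (0:ℝ)..π, ∑ k : Fin (n+1),
        (c j * c k) * (Real.cos ((j:ℕ) * θ) * Real.cos ((k:ℕ) * θ)))
      = ∑ k : Fin (n+1), (c j * c k) *
          (((if ((j:ℕ):ℤ) - ((k:ℕ):ℤ) = 0 then π else 0)
            + (if ((j:ℕ):ℤ) + ((k:ℕ):ℤ) = 0 then π else 0)) / 2) := by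
    intro j
    rw [intervalIntegral.integral_finset_sum
      (fun k _ => Continuous.intervalIntegrable (by fun_prop) 0 π)]
    refine Finset.sum_congr rfl fun k _ => ?_
    rw [intervalIntegral.integral_const_mul]
    congr 1
    have := GM_int_cos_cos ((j:ℕ):ℤ) ((k:ℕ):ℤ)
    push_cast at this ⊢
    exact this
  simp only [step]
  have eval_term : ∀ j k : Fin (n+1),
      (c j * c k) * (((if ((j:ℕ):ℤ) - ((k:ℕ):ℤ) = 0 then π else 0)
        + (if ((j:ℕ):ℤ) + ((k:ℕ):ℤ) = 0 then π else 0)) / 2)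
      = (if k = j then c j * c k * (π/2) else 0)
        + (if j = 0 then (if k = 0 then c j * c k * (π/2) else 0) else 0) := by
    intro j k
    have h1 : (((j:ℕ):ℤ) - ((k:ℕ):ℤ) = 0) ↔ k = j :=
      ⟨fun h => Fin.ext (by omega), fun h => by subst h; ring⟩
    have h2 : (((j:ℕ):ℤ) + ((k:ℕ):ℤ) = 0) ↔ (j = 0 ∧ k = 0) := by
      constructor
      · intro h
        exact ⟨Fin.ext (by rw [Fin.val_zero]; omega), Fin.ext (by rw [Fin.val_zero]; omega)⟩
      · rintro ⟨rfl, rfl⟩; simp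
    simp only [h1, h2]
    split_ifs with ha hb hc <;> simp_all <;> ring
  simp only [eval_term]
  rw [Finset.sum_comm (s := Finset.univ) (t := Finset.univ)
    (f := fun j k => (if k = j then c j * c k * (π/2) else 0)
        + (if j = 0 then (if k = 0 then c j * c k * (π/2) else 0) else 0))]
  simp only [Finset.sum_add_distrib]
  congr 1
  · refine Finset.sum_congr rfl fun k _ => ?_
    rw [Finset.sum_ite_eq Finset.univ k (fun j => c j * c k * (π/2))]
    simp [sq]
  · simp [Finset.sum_ite_eq', sq]

lemma GM_eval_cos (n : ℕ) (a : Fin (n+1) → ℝ)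
    (P : ℝ[X]) (ha : P = ∑ k : Fin (n+1), a k • Polynomial.Chebyshev.T ℝ (k : ℤ)) (θ : ℝ) :
    P.eval (Real.cos θ) = ∑ k : Fin (n+1), a k * Real.cos ((k:ℕ) * θ) := by
  rw [ha, Polynomial.eval_finset_sum]
  refine Finset.sum_congr rfl fun k _ => ?_
  rw [Polynomial.eval_smul, smul_eq_mul, Polynomial.Chebyshev.T_real_cos]
  push_cast
  ring_nf

lemma GM_eval_deriv (n : ℕ) (a : Fin (n+1) → ℝ)
    (P : ℝ[X]) (ha : P = ∑ k : Fin (n+1), a k • Polynomial.Chebyshev.T ℝ (k : ℤ)) (θ : ℝ) :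
    Real.sin θ * (Polynomial.derivative P).eval (Real.cos θ)
      = ∑ k : Fin (n+1), (a k * k) * Real.sin ((k:ℕ) * θ) := by
  rw [ha, map_sum, Polynomial.eval_finset_sum, Finset.mul_sum]
  refine Finset.sum_congr rfl fun k _ => ?_
  rw [Polynomial.derivative_smul, Polynomial.Chebyshev.T_derivative_eq_U,
    Polynomial.eval_smul, smul_eq_mul, Polynomial.eval_mul, Polynomial.eval_intCast]
  have hu := Polynomial.Chebyshev.U_real_cos θ ((k:ℤ) - 1)
  push_cast at hu ⊢
  rw [show ((k:ℝ) - 1 + 1) = (k:ℝ) by ring] at hu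
  linear_combination (a k * (k:ℝ)) * hu

end GMaux

/-- The weighted L²-Bernstein inequality for the Chebyshev weight (the case
`α = β = −1/2` of the Guessab–Milovanović inequality): for a real polynomial `P`
of degree at most `n ≥ 1`,
`∫_{−1}^1 √(1−x²) P'(x)² dx ≤ n² ∫_{−1}^1 P(x)²/√(1−x²) dx`. -/
theorem l2_bernstein_chebyshev_weight (n : ℕ) (hn : 1 ≤ n) (P : Polynomial ℝ)
    (hP : P.degree ≤ n) :
    (∫ x in Set.Ioo (-1 : ℝ) 1, Real.sqrt (1 - x ^ 2) * (Polynomial.derivative P).eval x ^ 2) ≤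
      (n : ℝ) ^ 2 * ∫ x in Set.Ioo (-1 : ℝ) 1, P.eval x ^ 2 / Real.sqrt (1 - x ^ 2) := by
  obtain ⟨a, ha⟩ := GM_cheb_expand n P hP
  have hL : (∫ x in Set.Ioo (-1 : ℝ) 1,
        Real.sqrt (1 - x ^ 2) * (Polynomial.derivative P).eval x ^ 2)
      = (∑ k : Fin (n+1), (a k * k) ^ 2 * (π/2))
        - (a 0 * ((0 : Fin (n+1)):ℕ)) ^ 2 * (π/2) := by
    rw [GM_subst_cos (fun x => Real.sqrt (1 - x ^ 2) * (Polynomial.derivative P).eval x ^ 2)]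
    have heq : Set.EqOn
        (fun θ => Real.sin θ * (Real.sqrt (1 - Real.cos θ ^ 2)
            * (Polynomial.derivative P).eval (Real.cos θ) ^ 2))
        (fun θ => (∑ k : Fin (n+1), (a k * k) * Real.sin ((k:ℕ) * θ)) ^ 2)
        (Set.Ioo (0:ℝ) π) := by
      intro θ hθ
      have hs : 0 ≤ Real.sin θ := Real.sin_nonneg_of_nonneg_of_le_pi hθ.1.le hθ.2.le
      have h1 : Real.sqrt (1 - Real.cos θ ^ 2) = Real.sin θ := by
        rw [← Real.sin_sq, Real.sqrt_sq hs]
      simp only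
      rw [h1, ← GM_eval_deriv n a P ha θ]
      ring
    rw [setIntegral_congr_fun measurableSet_Ioo heq,
      ← MeasureTheory.integral_Ioc_eq_integral_Ioo,
      ← intervalIntegral.integral_of_le Real.pi_pos.le]
    exact GM_int_sq_sin n (fun k => a k * k)
  have hR : (∫ x in Set.Ioo (-1 : ℝ) 1, P.eval x ^ 2 / Real.sqrt (1 - x ^ 2))
      = (∑ k : Fin (n+1), (a k) ^ 2 * (π/2)) + (a 0) ^ 2 * (π/2) := by
    rw [GM_subst_cos (fun x => P.eval x ^ 2 / Real.sqrt (1 - x ^ 2))]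
    have heq : Set.EqOn
        (fun θ => Real.sin θ * (P.eval (Real.cos θ) ^ 2 / Real.sqrt (1 - Real.cos θ ^ 2)))
        (fun θ => (∑ k : Fin (n+1), a k * Real.cos ((k:ℕ) * θ)) ^ 2)
        (Set.Ioo (0:ℝ) π) := by
      intro θ hθ
      have hs : 0 < Real.sin θ := Real.sin_pos_of_pos_of_lt_pi hθ.1 hθ.2
      have h1 : Real.sqrt (1 - Real.cos θ ^ 2) = Real.sin θ := by
        rw [← Real.sin_sq, Real.sqrt_sq hs.le]
      simp only
      rw [h1, mul_div_assoc', mul_comm, mul_div_assoc, div_self hs.ne', mul_one,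
        GM_eval_cos n a P ha θ]
    rw [setIntegral_congr_fun measurableSet_Ioo heq,
      ← MeasureTheory.integral_Ioc_eq_integral_Ioo,
      ← intervalIntegral.integral_of_le Real.pi_pos.le]
    exact GM_int_sq_cos n a
  rw [hL, hR]
  have h0 : (a 0 * ((0 : Fin (n+1)):ℕ)) ^ 2 * (π/2) = 0 := by simp
  rw [h0, sub_zero, mul_add]
  have hterm : ∀ k : Fin (n+1), (a k * k) ^ 2 * (π/2) ≤ (n:ℝ)^2 * ((a k) ^ 2 * (π/2)) := by
    intro k
    have hk : ((k:ℕ):ℝ) ≤ (n:ℝ) := by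
      have := Nat.lt_succ_iff.1 k.isLt
      exact_mod_cast this
    have hk0 : (0:ℝ) ≤ ((k:ℕ):ℝ) := Nat.cast_nonneg _
    have hsq : ((k:ℕ):ℝ)^2 ≤ (n:ℝ)^2 := by nlinarith
    have hpi : (0:ℝ) < π/2 := by positivity
    nlinarith [sq_nonneg (a k), mul_nonneg (sq_nonneg (a k)) hpi.le]
  calc ∑ k : Fin (n+1), (a k * k) ^ 2 * (π/2)
      ≤ ∑ k : Fin (n+1), (n:ℝ)^2 * ((a k) ^ 2 * (π/2)) := Finset.sum_le_sum fun k _ => hterm k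
    _ = (n:ℝ)^2 * ∑ k : Fin (n+1), (a k) ^ 2 * (π/2) := by rw [Finset.mul_sum]
    _ ≤ (n:ℝ)^2 * ∑ k : Fin (n+1), (a k) ^ 2 * (π/2) + (n:ℝ)^2 * ((a 0)^2 * (π/2)) := by
        have : (0:ℝ) ≤ (n:ℝ)^2 * ((a 0)^2 * (π/2)) := by positivity
        linarith
end

section
/- Let T be a trigonometric polynomial of degree at most n, i.e., T(t) = a₀ + Σ_{j=1}^n (a_j cos(jt) + b_j sin(jt)) with real coefficients, and let k ≥ 1. Then for every θ ∈ ℝ, |T^{(k)}(θ)| ≤ n^k · sup_{t∈ℝ} |T(t)|. -/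
open Real Finset

noncomputable section BernsteinAux

/-- grid points -/
def tg (n j : ℕ) : ℝ := (2*(j:ℝ) - 1) * Real.pi / (2*n)

/-- complex exponential at grid points -/
def wg (n j : ℕ) : ℂ := Complex.exp ((tg n j : ℂ) * Complex.I)

/-- Riesz coefficients -/
def cg (n j : ℕ) : ℝ := (-1)^(j+1) / (4*n* (Real.sin (tg n j / 2))^2)

variable {n j : ℕ}

lemma tg_pos (hn : 1 ≤ n) (hj : 1 ≤ j) : 0 < tg n j := by
  apply div_pos
  · apply mul_pos _ Real.pi_pos
    have : (1:ℝ) ≤ (j:ℝ) := by exact_mod_cast hj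
    linarith
  · positivity

lemma tg_lt (hn : 1 ≤ n) (hj : j ≤ 2*n) : tg n j < 2*Real.pi := by
  rw [tg, div_lt_iff₀ (by positivity)]
  have : (j:ℝ) ≤ 2*n := by exact_mod_cast hj
  nlinarith [Real.pi_pos]

lemma sin_half_tg_pos (hn : 1 ≤ n) (hj : 1 ≤ j) (hj2 : j ≤ 2*n) :
    0 < Real.sin (tg n j / 2) := by
  apply Real.sin_pos_of_pos_of_lt_pi
  · linarith [tg_pos hn hj]
  · linarith [tg_lt hn hj2]

lemma wg_ne_zero : wg n j ≠ 0 := Complex.exp_ne_zero _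

lemma wg_pow (s : ℕ) : (wg n j)^s = Complex.exp ((s * tg n j : ℝ) * Complex.I) := by
  rw [wg, ← Complex.exp_nat_mul]; congr 1; push_cast; ring

lemma wg_inv : (wg n j)⁻¹ = Complex.exp (-((tg n j : ℂ) * Complex.I)) := by
  rw [wg, ← Complex.exp_neg]

lemma sin_sq_half (x : ℝ) : 4 * Real.sin (x/2)^2 = 2 - 2*Real.cos x := by
  have h := Real.cos_two_mul (x/2)
  have h2 := Real.sin_sq_add_cos_sq (x/2)
  have hx : x = 2*(x/2) := by ring
  nlinarith [Real.cos_two_mul (x/2), Real.sin_sq_add_cos_sq (x/2),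
    (by rw [← hx] : Real.cos (2*(x/2)) = Real.cos x)]

lemma four_sin_sq_eq : ((4 * Real.sin (tg n j / 2)^2 : ℝ) : ℂ) = 2 - wg n j - (wg n j)⁻¹ := by
  rw [sin_sq_half]
  push_cast
  rw [wg_inv, wg, Complex.cos,
    show (-(tg n j:ℂ) * Complex.I) = -((tg n j:ℂ) * Complex.I) from by ring]
  ring

lemma wg_ne_one (hn : 1 ≤ n) (hj : 1 ≤ j) (hj2 : j ≤ 2*n) : wg n j ≠ 1 := by
  intro h
  have h4 := @four_sin_sq_eq n j
  rw [h] at h4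
  have h0' : ((4 * Real.sin (tg n j / 2)^2 : ℝ) : ℂ) = 0 := by rw [h4]; norm_num
  have h0 : (4 * Real.sin (tg n j / 2)^2 : ℝ) = 0 := by exact_mod_cast h0'
  have hs := sin_half_tg_pos hn hj hj2
  nlinarith

lemma wg_sub_one_ne_zero (hn : 1 ≤ n) (hj : 1 ≤ j) (hj2 : j ≤ 2*n) : wg n j - 1 ≠ 0 :=
  sub_ne_zero.mpr (wg_ne_one hn hj hj2)

lemma cos_nat_mul_pi (j : ℕ) : Real.cos (j*Real.pi) = (-1)^j := by
  simpa using Real.cos_nat_mul_pi_sub 0 j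

lemma cos_n_tg (hn : 1 ≤ n) : Real.cos (n * tg n j) = 0 := by
  have hn' : (n:ℝ) ≠ 0 := by positivity
  have : (n:ℝ) * tg n j = j*Real.pi - Real.pi/2 := by
    rw [tg]; field_simp
  rw [this, Real.cos_sub, Real.cos_pi_div_two, Real.sin_pi_div_two, Real.sin_nat_mul_pi]
  ring

lemma sin_n_tg (hn : 1 ≤ n) : Real.sin (n * tg n j) = (-1)^(j+1) := by
  have hn' : (n:ℝ) ≠ 0 := by positivity
  have : (n:ℝ) * tg n j = j*Real.pi - Real.pi/2 := by
    rw [tg]; field_simp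
  rw [this, Real.sin_sub, Real.cos_pi_div_two, Real.sin_pi_div_two, Real.sin_nat_mul_pi,
    _root_.cos_nat_mul_pi]
  ring

lemma wg_pow_2n (hn : 1 ≤ n) (hj : 1 ≤ j) : (wg n j)^(2*n) = -1 := by
  rw [wg_pow]
  have hn' : (n:ℝ) ≠ 0 := by positivity
  have h1 : ((2*n : ℕ) * tg n j : ℝ) = ((2*j-1 : ℕ):ℝ) * Real.pi := by
    have : ((2*j-1 : ℕ):ℝ) = 2*(j:ℝ)-1 := by
      have : 1 ≤ 2*j := by omega
      push_cast [Nat.cast_sub this]; ring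
    rw [tg, this]; push_cast; field_simp; try ring
  rw [h1]
  have h2 : ((((2*j-1 : ℕ) * Real.pi : ℝ)):ℂ) * Complex.I
      = ((2*j-1 : ℕ):ℂ) * ((Real.pi:ℂ) * Complex.I) := by push_cast; ring
  rw [h2, Complex.exp_nat_mul, Complex.exp_pi_mul_I]
  exact Odd.neg_one_pow ⟨j-1, by omega⟩


/-- grid exponential sums -/
def Sg (n s : ℕ) : ℂ := ∑ j ∈ Finset.Icc 1 (2*n), (wg n j)^s

lemma Sg_eq (n s : ℕ) (hn : 1 ≤ n) :
    Sg n s = Complex.exp ((s * Real.pi / (2*n) : ℝ) * Complex.I) *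
      ∑ i ∈ Finset.range (2*n), (Complex.exp ((s * Real.pi / n : ℝ) * Complex.I))^i := by
  rw [Sg, ← Finset.Ico_add_one_right_eq_Icc, Finset.sum_Ico_eq_sum_range, Finset.mul_sum]
  simp only [show 2*n+1-1 = 2*n from rfl]
  apply Finset.sum_congr rfl
  intro i _
  rw [wg_pow, ← Complex.exp_nat_mul, ← Complex.exp_add]
  congr 1
  have hn' : (n:ℝ) ≠ 0 := by positivity
  rw [tg]
  push_cast
  field_simp
  ring

lemma Sg_dvd (hn : 1 ≤ n) (k : ℕ) : Sg n (2*n*k) = (2*n:ℂ) * (-1)^k := by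
  rw [Sg_eq _ _ hn]
  have hn' : (n:ℝ) ≠ 0 := by positivity
  have h1 : ((2*n*k : ℕ) * Real.pi / n : ℝ) = (k:ℝ) * (2 * Real.pi) := by
    push_cast; field_simp
  have h2 : ((2*n*k : ℕ) * Real.pi / (2*n) : ℝ) = (k:ℝ) * Real.pi := by
    push_cast; field_simp
  rw [h1, h2]
  have hu : Complex.exp (((k:ℝ) * (2 * Real.pi) : ℝ) * Complex.I) = 1 := by
    have : (((k:ℝ) * (2 * Real.pi) : ℝ) : ℂ) * Complex.I = (k:ℂ) * (2 * Real.pi * Complex.I) := by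
      push_cast; ring
    rw [this, Complex.exp_nat_mul, Complex.exp_two_pi_mul_I, one_pow]
  have hA : Complex.exp (((k:ℝ) * Real.pi : ℝ) * Complex.I) = (-1:ℂ)^k := by
    have : (((k:ℝ) * Real.pi : ℝ) : ℂ) * Complex.I = (k:ℂ) * (Real.pi * Complex.I) := by
      push_cast; ring
    rw [this, Complex.exp_nat_mul, Complex.exp_pi_mul_I]
  rw [hu, hA]
  simp [mul_comm]

lemma Sg_not_dvd (hn : 1 ≤ n) (s : ℕ) (h : ¬ (2*n ∣ s)) : Sg n s = 0 := by
  rw [Sg_eq _ _ hn]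
  have hn' : (n:ℝ) ≠ 0 := by positivity
  have hnc : (n:ℂ) ≠ 0 := by exact_mod_cast Nat.cast_ne_zero.mpr (by omega)
  set u := Complex.exp ((s * Real.pi / n : ℝ) * Complex.I) with hu
  have hu1 : u ≠ 1 := by
    intro h1
    rw [hu, Complex.exp_eq_one_iff] at h1
    obtain ⟨m, hm⟩ := h1
    apply h
    rw [show (m:ℂ) * (2 * (Real.pi:ℂ) * Complex.I) = ((m:ℂ) * (2 * (Real.pi:ℂ))) * Complex.I
      from by ring] at hm
    have hm' : ((s * Real.pi / n : ℝ) : ℂ) = (m:ℂ) * (2 * (Real.pi:ℂ)) :=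
      mul_right_cancel₀ Complex.I_ne_zero hm
    have hmr : (s * Real.pi / n : ℝ) = (m:ℝ) * (2 * Real.pi) := by exact_mod_cast hm'
    have hpi : Real.pi ≠ 0 := Real.pi_ne_zero
    rw [div_eq_iff hn'] at hmr
    have hs : (s:ℝ) * Real.pi = ((m:ℝ) * (2*(n:ℝ))) * Real.pi := by rw [hmr]; ring
    have hs2 : (s:ℝ) = (m:ℝ) * (2*(n:ℝ)) := mul_right_cancel₀ hpi hs
    have hm0 : 0 ≤ m := by
      by_contra hneg
      push_neg at hneg
      have h1 : (m:ℝ) * (2*(n:ℝ)) < 0 := by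
        apply mul_neg_of_neg_of_pos
        · exact_mod_cast hneg
        · positivity
      have h2 : (0:ℝ) ≤ (s:ℝ) := by positivity
      linarith
    lift m to ℕ using hm0 with m'
    refine ⟨m', ?_⟩
    have : (s:ℝ) = ((2*n*m' : ℕ) : ℝ) := by push_cast; push_cast at hs2; linarith
    exact_mod_cast this
  have hu2n : u^(2*n) = 1 := by
    rw [hu, ← Complex.exp_nat_mul]
    have heq : ((2*n : ℕ):ℂ) * (((s * Real.pi / n : ℝ):ℂ) * Complex.I)
        = (s:ℂ) * (2*(Real.pi:ℂ)*Complex.I) := by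
      push_cast
      field_simp
    rw [heq, Complex.exp_nat_mul, Complex.exp_two_pi_mul_I, one_pow]
  rw [geom_sum_eq hu1, hu2n]
  simp

lemma inner_sum_lo (hn : 1 ≤ n) (c : ℕ) (h1 : 1 ≤ c) (h2 : c ≤ 2*n) :
    ∑ q ∈ Finset.range (2*n), Sg n (c+q) = -(2*(n:ℂ)) := by
  have hmem : 2*n - c ∈ Finset.range (2*n) := by
    rw [Finset.mem_range]; omega
  rw [Finset.sum_eq_single_of_mem _ hmem]
  · have : c + (2*n - c) = 2*n*1 := by omega
    rw [this, Sg_dvd hn]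
    simp
  · intro q hq hne
    rw [Finset.mem_range] at hq
    apply Sg_not_dvd hn
    rintro ⟨k, hk⟩
    have hub : k ≤ 1 := by
      by_contra h'
      push_neg at h'
      have := Nat.mul_le_mul_left (2*n) h'
      omega
    interval_cases k <;> omega

lemma inner_sum_hi (hn : 1 ≤ n) (c : ℕ) (h1 : 2*n+1 ≤ c) (h2 : c ≤ 4*n) :
    ∑ q ∈ Finset.range (2*n), Sg n (c+q) = 2*(n:ℂ) := by
  have hmem : 4*n - c ∈ Finset.range (2*n) := by
    rw [Finset.mem_range]; omega
  rw [Finset.sum_eq_single_of_mem _ hmem]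
  · have : c + (4*n - c) = 2*n*2 := by omega
    rw [this, Sg_dvd hn]
    simp
  · intro q hq hne
    rw [Finset.mem_range] at hq
    apply Sg_not_dvd hn
    rintro ⟨k, hk⟩
    have hub : k ≤ 2 := by
      by_contra h'
      push_neg at h'
      have := Nat.mul_le_mul_left (2*n) h'
      omega
    interval_cases k <;> omega

lemma double_sum (hn : 1 ≤ n) (e : ℕ) (he1 : n+1 ≤ e) (he2 : e ≤ 2*n+1) :
    ∑ p ∈ Finset.range (2*n), ∑ q ∈ Finset.range (2*n), Sg n (e+p+q)
      = (4*(n:ℂ)) * ((e:ℂ) - n - 1) := by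
  set k := 2*n+1-e with hk
  have hk2 : k ≤ 2*n := by omega
  rw [← Finset.sum_range_add_sum_Ico _ hk2]
  have hlo : ∑ p ∈ Finset.range k, ∑ q ∈ Finset.range (2*n), Sg n (e+p+q)
      = (k:ℂ) * (-(2*(n:ℂ))) := by
    have h1 : ∀ p ∈ Finset.range k, ∑ q ∈ Finset.range (2*n), Sg n (e+p+q) = -(2*(n:ℂ)) := by
      intro p hp
      rw [Finset.mem_range] at hp
      exact inner_sum_lo hn (e+p) (by omega) (by omega)
    rw [Finset.sum_congr rfl h1, Finset.sum_const, Finset.card_range, nsmul_eq_mul]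
  have hhi : ∑ p ∈ Finset.Ico k (2*n), ∑ q ∈ Finset.range (2*n), Sg n (e+p+q)
      = ((2*n - k : ℕ):ℂ) * (2*(n:ℂ)) := by
    have h1 : ∀ p ∈ Finset.Ico k (2*n), ∑ q ∈ Finset.range (2*n), Sg n (e+p+q) = 2*(n:ℂ) := by
      intro p hp
      rw [Finset.mem_Ico] at hp
      exact inner_sum_hi hn (e+p) (by omega) (by omega)
    rw [Finset.sum_congr rfl h1, Finset.sum_const, Nat.card_Ico, nsmul_eq_mul]
  rw [hlo, hhi]
  have h1 : ((2*n - k : ℕ):ℂ) = 2*(n:ℂ) - (k:ℂ) := by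
    push_cast [Nat.cast_sub hk2]; ring
  have h2 : ((k:ℕ):ℂ) = 2*(n:ℂ) + 1 - (e:ℂ) := by
    rw [hk]; push_cast [Nat.cast_sub (by omega : e ≤ 2*n+1)]; ring
  rw [h1, h2]
  ring

lemma geom_wg (hn : 1 ≤ n) (hj : 1 ≤ j) (hj2 : j ≤ 2*n) :
    ∑ p ∈ Finset.range (2*n), (wg n j)^p = -2 / (wg n j - 1) := by
  have h := geom_sum_mul (wg n j) (2*n)
  rw [wg_pow_2n hn hj] at h
  rw [eq_div_iff (wg_sub_one_ne_zero hn hj hj2), h]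
  ring

lemma key1 (hn : 1 ≤ n) (e : ℕ) (he1 : n+1 ≤ e) (he2 : e ≤ 2*n+1) :
    ∑ j ∈ Finset.Icc 1 (2*n), (wg n j)^e / (wg n j - 1)^2
      = (n:ℂ) * ((e:ℂ) - n - 1) := by
  have hstep : ∀ j ∈ Finset.Icc 1 (2*n), (wg n j)^e / (wg n j - 1)^2
      = (1/4) * ∑ p ∈ Finset.range (2*n), ∑ q ∈ Finset.range (2*n), (wg n j)^(e+p+q) := by
    intro j hj
    rw [Finset.mem_Icc] at hj
    have hg := geom_wg hn hj.1 hj.2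
    have hne := wg_sub_one_ne_zero hn hj.1 hj.2
    have hpw : ∀ p q : ℕ, (wg n j)^(e+p+q) = (wg n j)^e * (wg n j)^p * (wg n j)^q := by
      intro p q; rw [pow_add, pow_add]
    have : ∑ p ∈ Finset.range (2*n), ∑ q ∈ Finset.range (2*n), (wg n j)^(e+p+q)
        = ((wg n j)^e * ∑ p ∈ Finset.range (2*n), (wg n j)^p)
          * (∑ q ∈ Finset.range (2*n), (wg n j)^q) := by
      simp_rw [hpw, ← Finset.mul_sum, ← Finset.sum_mul, ← Finset.mul_sum]
    rw [this, hg]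
    field_simp
    ring
  rw [Finset.sum_congr rfl hstep, ← Finset.mul_sum, Finset.sum_comm]
  have : ∀ p ∈ Finset.range (2*n), ∑ j ∈ Finset.Icc 1 (2*n), ∑ q ∈ Finset.range (2*n),
      (wg n j)^(e+p+q) = ∑ q ∈ Finset.range (2*n), Sg n (e+p+q) := by
    intro p _
    rw [Finset.sum_comm]
    rfl
  rw [Finset.sum_congr rfl this, double_sum hn e he1 he2]
  ring

lemma wg_pow_n (hn : 1 ≤ n) : (wg n j)^n = Complex.I * (-1:ℂ)^(j+1) := by
  rw [wg_pow, Complex.exp_mul_I, ← Complex.ofReal_cos, ← Complex.ofReal_sin,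
    cos_n_tg hn, sin_n_tg hn]
  push_cast
  ring

lemma cg_complex (hn : 1 ≤ n) (hj : 1 ≤ j) (hj2 : j ≤ 2*n) :
    (cg n j : ℂ) = Complex.I * (wg n j)^(n+1) / ((n:ℂ) * (wg n j - 1)^2) := by
  have hw : wg n j ≠ 0 := wg_ne_zero
  have hw1 : wg n j - 1 ≠ 0 := wg_sub_one_ne_zero hn hj hj2
  have hnc : (n:ℂ) ≠ 0 := by exact_mod_cast Nat.cast_ne_zero.mpr (by omega)
  have hs := sin_half_tg_pos hn hj hj2
  have hD : (2 - wg n j - (wg n j)⁻¹ : ℂ) = -(wg n j - 1)^2 / wg n j := by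
    field_simp
    ring
  have hnum : (((-1:ℝ)^(j+1) : ℝ) : ℂ) = - Complex.I * (wg n j)^n := by
    rw [Complex.ofReal_pow, Complex.ofReal_neg, Complex.ofReal_one, wg_pow_n hn, neg_mul,
      ← mul_assoc, Complex.I_mul_I]
    ring
  have hden : ((4*(n:ℝ)*Real.sin (tg n j / 2)^2 : ℝ) : ℂ)
      = (n:ℂ) * (2 - wg n j - (wg n j)⁻¹) := by
    rw [show (4*(n:ℝ)*Real.sin (tg n j / 2)^2 : ℝ)
        = (n:ℝ)*(4*Real.sin (tg n j / 2)^2 : ℝ) from by ring,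
      Complex.ofReal_mul, four_sin_sq_eq, Complex.ofReal_natCast]
  have hcg0 : (cg n j : ℂ) = (- Complex.I * (wg n j)^n) / ((n:ℂ) * (2 - wg n j - (wg n j)⁻¹)) := by
    rw [cg, Complex.ofReal_div, hnum, hden]
  rw [hcg0, hD]
  field_simp
  ring

lemma key2 (hn : 1 ≤ n) (m : ℕ) (hm : m ≤ n) :
    ∑ j ∈ Finset.Icc 1 (2*n), (cg n j : ℂ) * (wg n j)^m = Complex.I * m := by
  have hnc : (n:ℂ) ≠ 0 := by exact_mod_cast Nat.cast_ne_zero.mpr (by omega)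
  have hstep : ∀ j ∈ Finset.Icc 1 (2*n), (cg n j : ℂ) * (wg n j)^m
      = (Complex.I / n) * ((wg n j)^(m+n+1) / (wg n j - 1)^2) := by
    intro j hj
    rw [Finset.mem_Icc] at hj
    have hw1 : wg n j - 1 ≠ 0 := wg_sub_one_ne_zero hn hj.1 hj.2
    rw [cg_complex hn hj.1 hj.2]
    rw [show m+n+1 = (n+1)+m from by ring, pow_add]
    field_simp
    ring
  rw [Finset.sum_congr rfl hstep, ← Finset.mul_sum,
    key1 hn (m+n+1) (by omega) (by omega)]
  have : ((m+n+1 : ℕ) : ℂ) - n - 1 = (m:ℂ) := by push_cast; ring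
  rw [this]
  field_simp

lemma sum_cg_real (hn : 1 ≤ n) (m : ℕ) (hm : m ≤ n) :
    (∑ j ∈ Finset.Icc 1 (2*n), cg n j * Real.cos (m * tg n j)) = 0 ∧
    (∑ j ∈ Finset.Icc 1 (2*n), cg n j * Real.sin (m * tg n j)) = (m:ℝ) := by
  have h := key2 hn m hm
  have h3 : ∀ j ∈ Finset.Icc 1 (2*n), (cg n j : ℂ) * (wg n j)^m
      = ((cg n j * Real.cos (m * tg n j) : ℝ) : ℂ)
        + ((cg n j * Real.sin (m * tg n j) : ℝ) : ℂ) * Complex.I := by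
    intro j _
    rw [wg_pow, Complex.exp_mul_I, ← Complex.ofReal_cos, ← Complex.ofReal_sin]
    push_cast
    ring
  rw [Finset.sum_congr rfl h3, Finset.sum_add_distrib, ← Finset.sum_mul,
    ← Complex.ofReal_sum, ← Complex.ofReal_sum] at h
  rw [Complex.ext_iff] at h
  simp only [Complex.add_re, Complex.ofReal_re, Complex.mul_re, Complex.I_re, Complex.I_im,
    Complex.ofReal_im, Complex.add_im, Complex.mul_im, Complex.mul_re, Complex.natCast_re,
    Complex.natCast_im] at h
  constructor
  · linarith [h.1]
  · linarith [h.2]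

lemma sum_abs_cg (hn : 1 ≤ n) : ∑ j ∈ Finset.Icc 1 (2*n), |cg n j| = (n:ℝ) := by
  have h : ∀ j ∈ Finset.Icc 1 (2*n), |cg n j| = cg n j * Real.sin ((n:ℕ) * tg n j) := by
    intro j hj
    rw [Finset.mem_Icc] at hj
    rw [sin_n_tg hn, cg]
    have hs := sin_half_tg_pos hn hj.1 hj.2
    have hd : (0:ℝ) < 4*n*Real.sin (tg n j / 2)^2 := by positivity
    rw [abs_div, abs_pow, abs_neg, abs_one, one_pow, abs_of_pos hd, div_mul_eq_mul_div]
    congr 1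
    have : ((-1:ℝ)^(j+1)) * ((-1:ℝ)^(j+1)) = 1 := by
      rw [← pow_add]
      exact Even.neg_one_pow ⟨j+1, by ring⟩
    exact this.symm
  rw [Finset.sum_congr rfl h, (sum_cg_real hn n le_rfl).2]

/-- the trig polynomial -/
def Fp (a b : ℕ → ℝ) (n : ℕ) (t : ℝ) : ℝ :=
  a 0 + ∑ j ∈ Finset.Icc 1 n, (a j * Real.cos (j * t) + b j * Real.sin (j * t))

lemma hasDerivAt_Fp (a b : ℕ → ℝ) (n : ℕ) (x : ℝ) :
    HasDerivAt (fun t => Fp a b n t)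
      (Fp (fun m => (m:ℝ) * b m) (fun m => -(m:ℝ) * a m) n x) x := by
  have h : HasDerivAt (fun t => Fp a b n t)
      (0 + ∑ j ∈ Finset.Icc 1 n,
        (a j * (-Real.sin ((j:ℝ)*x) * (j:ℝ)) + b j * (Real.cos ((j:ℝ)*x) * (j:ℝ)))) x := by
    apply HasDerivAt.add
    · exact hasDerivAt_const x (a 0)
    · apply HasDerivAt.fun_sum
      intro j _
      apply HasDerivAt.add
      · have := ((Real.hasDerivAt_cos ((j:ℝ)*x)).comp x
          ((hasDerivAt_id x).const_mul (j:ℝ))).const_mul (a j)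
        simpa [Function.comp] using this
      · have := ((Real.hasDerivAt_sin ((j:ℝ)*x)).comp x
          ((hasDerivAt_id x).const_mul (j:ℝ))).const_mul (b j)
        simpa [Function.comp] using this
  convert h using 1
  simp only [Fp]
  congr 1
  · simp
  · apply Finset.sum_congr rfl
    intro j _
    ring

lemma deriv_Fp (a b : ℕ → ℝ) (n : ℕ) :
    deriv (fun t => Fp a b n t) = fun x => Fp (fun m => (m:ℝ) * b m) (fun m => -(m:ℝ) * a m) n x :=
  funext fun x => (hasDerivAt_Fp a b n x).deriv

lemma Fp_bdd (a b : ℕ → ℝ) (n : ℕ) : BddAbove (Set.range fun t => |Fp a b n t|) := by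
  refine ⟨|a 0| + ∑ j ∈ Finset.Icc 1 n, (|a j| + |b j|), ?_⟩
  rintro y ⟨t, rfl⟩
  simp only [Fp]
  refine le_trans (abs_add_le _ _) ?_
  gcongr
  refine le_trans (Finset.abs_sum_le_sum_abs _ _) ?_
  apply Finset.sum_le_sum
  intro j _
  refine le_trans (abs_add_le _ _) (add_le_add ?_ ?_)
  · rw [abs_mul]
    exact mul_le_of_le_one_right (abs_nonneg _) (Real.abs_cos_le_one _)
  · rw [abs_mul]
    exact mul_le_of_le_one_right (abs_nonneg _) (Real.abs_sin_le_one _)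

lemma sup_Fp_nonneg (a b : ℕ → ℝ) (n : ℕ) : 0 ≤ ⨆ t : ℝ, |Fp a b n t| :=
  Real.iSup_nonneg fun t => abs_nonneg _

lemma Fp_le_sup (a b : ℕ → ℝ) (n : ℕ) (x : ℝ) : |Fp a b n x| ≤ ⨆ t : ℝ, |Fp a b n t| :=
  le_ciSup (Fp_bdd a b n) x

lemma sum_cg_cos_shift (hn : 1 ≤ n) (m : ℕ) (hm : m ≤ n) (x : ℝ) :
    ∑ j ∈ Finset.Icc 1 (2*n), cg n j * Real.cos ((m:ℝ)*x + (m:ℝ)*tg n j)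
      = -(m:ℝ) * Real.sin ((m:ℝ)*x) := by
  have hc := (sum_cg_real hn m hm).1
  have hs := (sum_cg_real hn m hm).2
  have hterm : ∀ j : ℕ, cg n j * Real.cos ((m:ℝ)*x + (m:ℝ)*tg n j)
      = Real.cos ((m:ℝ)*x) * (cg n j * Real.cos ((m:ℝ) * tg n j))
        - Real.sin ((m:ℝ)*x) * (cg n j * Real.sin ((m:ℝ) * tg n j)) := by
    intro j
    rw [Real.cos_add]
    ring
  simp_rw [hterm]
  rw [Finset.sum_sub_distrib, ← Finset.mul_sum, ← Finset.mul_sum, hc, hs]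
  ring

lemma sum_cg_sin_shift (hn : 1 ≤ n) (m : ℕ) (hm : m ≤ n) (x : ℝ) :
    ∑ j ∈ Finset.Icc 1 (2*n), cg n j * Real.sin ((m:ℝ)*x + (m:ℝ)*tg n j)
      = (m:ℝ) * Real.cos ((m:ℝ)*x) := by
  have hc := (sum_cg_real hn m hm).1
  have hs := (sum_cg_real hn m hm).2
  have hterm : ∀ j : ℕ, cg n j * Real.sin ((m:ℝ)*x + (m:ℝ)*tg n j)
      = Real.sin ((m:ℝ)*x) * (cg n j * Real.cos ((m:ℝ) * tg n j))
        + Real.cos ((m:ℝ)*x) * (cg n j * Real.sin ((m:ℝ) * tg n j)) := by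
    intro j
    rw [Real.sin_add]
    ring
  simp_rw [hterm]
  rw [Finset.sum_add_distrib, ← Finset.mul_sum, ← Finset.mul_sum, hc, hs]
  ring

lemma sum_cg_zero (hn : 1 ≤ n) : ∑ j ∈ Finset.Icc 1 (2*n), cg n j = 0 := by
  have h := (sum_cg_real hn 0 (Nat.zero_le n)).1
  simpa using h

lemma riesz_eq (a b : ℕ → ℝ) (hn : 1 ≤ n) (x : ℝ) :
    Fp (fun m => (m:ℝ) * b m) (fun m => -(m:ℝ) * a m) n x
      = ∑ j ∈ Finset.Icc 1 (2*n), cg n j * Fp a b n (x + tg n j) := by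
  have hper : ∀ m ∈ Finset.Icc 1 n,
      ∑ j ∈ Finset.Icc 1 (2*n), (cg n j * (a m * Real.cos ((m:ℝ)*x + (m:ℝ)*tg n j))
          + cg n j * (b m * Real.sin ((m:ℝ)*x + (m:ℝ)*tg n j)))
        = a m * (-(m:ℝ) * Real.sin ((m:ℝ)*x)) + b m * ((m:ℝ) * Real.cos ((m:ℝ)*x)) := by
    intro m hm
    rw [Finset.mem_Icc] at hm
    have hterm : ∀ j : ℕ, cg n j * (a m * Real.cos ((m:ℝ)*x + (m:ℝ)*tg n j))
          + cg n j * (b m * Real.sin ((m:ℝ)*x + (m:ℝ)*tg n j))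
        = a m * (cg n j * Real.cos ((m:ℝ)*x + (m:ℝ)*tg n j))
          + b m * (cg n j * Real.sin ((m:ℝ)*x + (m:ℝ)*tg n j)) := by
      intro j; ring
    simp_rw [hterm]
    rw [Finset.sum_add_distrib, ← Finset.mul_sum, ← Finset.mul_sum,
      sum_cg_cos_shift hn m hm.2 x, sum_cg_sin_shift hn m hm.2 x]
  calc Fp (fun m => (m:ℝ) * b m) (fun m => -(m:ℝ) * a m) n x
      = ∑ m ∈ Finset.Icc 1 n, (a m * (-(m:ℝ) * Real.sin ((m:ℝ)*x))
          + b m * ((m:ℝ) * Real.cos ((m:ℝ)*x))) := by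
        simp only [Fp, Nat.cast_zero, zero_mul, zero_add]
        apply Finset.sum_congr rfl
        intro m _
        ring
    _ = ∑ m ∈ Finset.Icc 1 n, ∑ j ∈ Finset.Icc 1 (2*n),
          (cg n j * (a m * Real.cos ((m:ℝ)*x + (m:ℝ)*tg n j))
            + cg n j * (b m * Real.sin ((m:ℝ)*x + (m:ℝ)*tg n j))) :=
        (Finset.sum_congr rfl hper).symm
    _ = ∑ j ∈ Finset.Icc 1 (2*n), cg n j * Fp a b n (x + tg n j) := by
        rw [Finset.sum_comm]
        have h0 : ∑ j ∈ Finset.Icc 1 (2*n), cg n j * a 0 = 0 := by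
          rw [← Finset.sum_mul, sum_cg_zero hn, zero_mul]
        rw [← zero_add (∑ j ∈ Finset.Icc 1 (2*n), ∑ m ∈ Finset.Icc 1 n, _), ← h0,
          ← Finset.sum_add_distrib]
        apply Finset.sum_congr rfl
        intro j _
        rw [Fp, mul_add, Finset.mul_sum]
        congr 1
        apply Finset.sum_congr rfl
        intro m _
        rw [mul_add, mul_add ((m:ℝ))]

lemma riesz_bound (a b : ℕ → ℝ) (hn : 1 ≤ n) (x : ℝ) :
    |Fp (fun m => (m:ℝ) * b m) (fun m => -(m:ℝ) * a m) n x|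
      ≤ (n:ℝ) * ⨆ t : ℝ, |Fp a b n t| := by
  rw [riesz_eq a b hn x]
  calc |∑ j ∈ Finset.Icc 1 (2*n), cg n j * Fp a b n (x + tg n j)|
      ≤ ∑ j ∈ Finset.Icc 1 (2*n), |cg n j * Fp a b n (x + tg n j)| :=
        Finset.abs_sum_le_sum_abs _ _
    _ ≤ ∑ j ∈ Finset.Icc 1 (2*n), |cg n j| * (⨆ t : ℝ, |Fp a b n t|) := by
        apply Finset.sum_le_sum
        intro j _
        rw [abs_mul]
        exact mul_le_mul_of_nonneg_left (Fp_le_sup a b n _) (abs_nonneg _)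
    _ = (n:ℝ) * ⨆ t : ℝ, |Fp a b n t| := by
        rw [← Finset.sum_mul, sum_abs_cg hn]

lemma main_aux (n : ℕ) (hn : 1 ≤ n) :
    ∀ k, 1 ≤ k → ∀ (a b : ℕ → ℝ) (θ : ℝ),
      |iteratedDeriv k (fun t => Fp a b n t) θ| ≤ (n:ℝ)^k * ⨆ t : ℝ, |Fp a b n t| := by
  intro k
  induction k with
  | zero => omega
  | succ k ih =>
    intro _ a b θ
    rcases Nat.eq_zero_or_pos k with hk0 | hk1
    · subst hk0
      rw [iteratedDeriv_one, deriv_Fp a b n, pow_one]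
      exact riesz_bound a b hn θ
    · rw [iteratedDeriv_succ', deriv_Fp a b n]
      have h1 := ih hk1 (fun m => (m:ℝ) * b m) (fun m => -(m:ℝ) * a m) θ
      refine le_trans h1 ?_
      have h2 : (⨆ t : ℝ, |Fp (fun m => (m:ℝ) * b m) (fun m => -(m:ℝ) * a m) n t|)
          ≤ (n:ℝ) * ⨆ t : ℝ, |Fp a b n t| :=
        ciSup_le fun x => riesz_bound a b hn x
      calc (n:ℝ)^k * ⨆ t : ℝ, |Fp (fun m => (m:ℝ) * b m) (fun m => -(m:ℝ) * a m) n t|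
          ≤ (n:ℝ)^k * ((n:ℝ) * ⨆ t : ℝ, |Fp a b n t|) :=
            mul_le_mul_of_nonneg_left h2 (by positivity)
        _ = (n:ℝ)^(k+1) * ⨆ t : ℝ, |Fp a b n t| := by ring

lemma iteratedDeriv_zero_fun (k : ℕ) : iteratedDeriv k (fun _ : ℝ => (0:ℝ)) = fun _ => 0 := by
  induction k with
  | zero => rw [iteratedDeriv_zero]
  | succ k ih =>
    rw [iteratedDeriv_succ', show deriv (fun _ : ℝ => (0:ℝ)) = fun _ => 0 from
      funext fun x => deriv_const x 0, ih]

end BernsteinAux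

/-- Bernstein's inequality for higher derivatives of trigonometric polynomials:
if `T(t) = a₀ + ∑_{j=1}^n (aⱼ cos(jt) + bⱼ sin(jt))` and `k ≥ 1`, then for every `θ`,
`|T⁽ᵏ⁾(θ)| ≤ nᵏ · sup_t |T(t)|`. -/
theorem bernstein_trig_higher_derivative (n k : ℕ) (hk : 1 ≤ k) (a b : ℕ → ℝ) (T : ℝ → ℝ)
    (hT : ∀ t : ℝ, T t =
      a 0 + ∑ j ∈ Finset.Icc 1 n, (a j * Real.cos (j * t) + b j * Real.sin (j * t)))
    (θ : ℝ) :
    |iteratedDeriv k T θ| ≤ (n : ℝ) ^ k * ⨆ t : ℝ, |T t| := by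
  rcases Nat.eq_zero_or_pos n with hn0 | hn
  · subst hn0
    have hTc : T = fun _ => a 0 := funext fun t => by simpa using hT t
    obtain ⟨k', rfl⟩ : ∃ k', k = k'+1 := ⟨k-1, by omega⟩
    have hder : deriv T = fun _ : ℝ => (0:ℝ) := by
      rw [hTc]
      exact funext fun x => deriv_const x (a 0)
    rw [iteratedDeriv_succ', hder, iteratedDeriv_zero_fun]
    have hsup : 0 ≤ (0:ℝ)^(k'+1) * ⨆ t : ℝ, |T t| := by
      apply mul_nonneg (by positivity)
      exact Real.iSup_nonneg fun t => abs_nonneg _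
    simpa using hsup
  · have hTF : T = fun t => Fp a b n t := funext fun t => hT t
    rw [hTF]
    exact main_aux n hn k hk a b θ
end
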